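/- arXiv:2405.03469 — 3 statements merged into one kernel-verified Lean document; each statement's English description precedes it below -/
import Mathlib

section
/- Let α > −1. Define w : ℝ → ℝ by w(x) := exp(−x²/2)·(1/Γ((1+α)/2))·∫₀^∞ exp(−t² − 2xt)·t^((α−1)/2) dt, where Γ is the real Gamma function. Then w is twice differentiable on ℝ and satisfies w″(x) = (x² + α)·w(x) for every real x. -/
open Set Real MeasureTheory Filter Metric Topology


lemma aux_meas (c q x : ℝ) :
    AEStronglyMeasurable (fun t : ℝ => c * (Real.exp (-t ^ 2 - 2 * x * t) * t ^ q))
      (volume.restrict (Ioi 0)) := by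
  apply ContinuousOn.aestronglyMeasurable _ measurableSet_Ioi
  have h1 : ContinuousOn (fun t : ℝ => Real.exp (-t ^ 2 - 2 * x * t)) (Ioi 0) :=
    Continuous.continuousOn (by continuity)
  have h2 : ContinuousOn (fun t : ℝ => t ^ q) (Ioi 0) := fun t ht =>
    (Real.continuousAt_rpow_const t q (Or.inl (ne_of_gt ht))).continuousWithinAt
  exact (h1.mul h2).const_smul c |>.congr (fun t ht => by simp [smul_eq_mul])

lemma aux_integrable (p x : ℝ) (hp : -1 < p) :
    IntegrableOn (fun t : ℝ => Real.exp (-t ^ 2 - 2 * x * t) * t ^ p) (Ioi 0) := by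
  have hG : IntegrableOn (fun t : ℝ => Real.exp ((1 - 2*x)^2/4) * (Real.exp (-t) * t ^ p))
      (Ioi 0) := by
    have := (Real.GammaIntegral_convergent (s := p + 1) (by linarith)).const_mul
      (Real.exp ((1 - 2*x)^2/4))
    exact IntegrableOn.congr_fun this (fun t _ => by simp) measurableSet_Ioi
  refine hG.mono' (by simpa using aux_meas 1 p x) ?_
  filter_upwards [ae_restrict_mem measurableSet_Ioi] with t ht
  have ht' : (0:ℝ) < t := ht
  have h1 : (0:ℝ) ≤ t ^ p := Real.rpow_nonneg ht'.le p
  rw [Real.norm_eq_abs, abs_of_nonneg (by positivity)]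
  have h2 : Real.exp (-t ^ 2 - 2 * x * t) ≤ Real.exp ((1 - 2*x)^2/4) * Real.exp (-t) := by
    rw [← Real.exp_add]
    apply Real.exp_le_exp.2
    nlinarith [sq_nonneg (t - (1 - 2*x)/2)]
  calc Real.exp (-t ^ 2 - 2 * x * t) * t ^ p
      ≤ (Real.exp ((1 - 2*x)^2/4) * Real.exp (-t)) * t ^ p := by
        exact mul_le_mul_of_nonneg_right h2 h1
    _ = Real.exp ((1 - 2*x)^2/4) * (Real.exp (-t) * t ^ p) := by ring

lemma keyD (c q : ℝ) (hq : -1 < q) (x₀ : ℝ) :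
    HasDerivAt (fun x : ℝ => ∫ t in Ioi (0:ℝ), c * (Real.exp (-t ^ 2 - 2 * x * t) * t ^ q))
      (∫ t in Ioi (0:ℝ), (-2 * c) * (Real.exp (-t ^ 2 - 2 * x₀ * t) * t ^ (q + 1))) x₀ := by
  have hb : IntegrableOn
      (fun t : ℝ => (2 * |c|) * (Real.exp (-t ^ 2 - 2 * (-(|x₀| + 1)) * t) * t ^ (q + 1)))
      (Ioi 0) := (aux_integrable (q + 1) (-(|x₀| + 1)) (by linarith)).const_mul _
  have := hasDerivAt_integral_of_dominated_loc_of_deriv_le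
      (F := fun x t => c * (Real.exp (-t ^ 2 - 2 * x * t) * t ^ q))
      (F' := fun x t => (-2 * c) * (Real.exp (-t ^ 2 - 2 * x * t) * t ^ (q + 1)))
      (bound := fun t => (2 * |c|) * (Real.exp (-t ^ 2 - 2 * (-(|x₀| + 1)) * t) * t ^ (q + 1)))
      (μ := volume.restrict (Ioi 0)) (x₀ := x₀) (ball_mem_nhds x₀ one_pos)
      (Eventually.of_forall fun x => aux_meas c q x)
      ((aux_integrable q x₀ hq).const_mul c)
      (aux_meas (-2 * c) (q + 1) x₀)
      ?_ hb ?_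
  · exact this.2
  · filter_upwards [ae_restrict_mem measurableSet_Ioi] with t ht x hx
    have ht' : (0:ℝ) < t := ht
    have hxb : |x| ≤ |x₀| + 1 := by
      have := mem_ball_iff_norm.1 hx
      rw [Real.norm_eq_abs] at this
      calc |x| = |x₀ + (x - x₀)| := by ring_nf
        _ ≤ |x₀| + |x - x₀| := abs_add_le _ _
        _ ≤ |x₀| + 1 := by linarith
    have h2 : Real.exp (-t ^ 2 - 2 * x * t) ≤ Real.exp (-t ^ 2 - 2 * (-(|x₀| + 1)) * t) := by
      apply Real.exp_le_exp.2
      have : -(2 * x * t) ≤ 2 * (|x₀| + 1) * t := by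
        have h3 : -x ≤ |x₀| + 1 := (neg_le_abs x).trans hxb
        nlinarith
      linarith
    rw [Real.norm_eq_abs, abs_mul,
      abs_of_nonneg (show (0:ℝ) ≤ Real.exp (-t ^ 2 - 2 * x * t) * t ^ (q + 1) by positivity),
      show |(-2 * c)| = 2 * |c| by rw [abs_mul]; simp]
    have h1 : (0:ℝ) ≤ t ^ (q + 1) := Real.rpow_nonneg ht'.le _
    have h4 : (0:ℝ) ≤ 2 * |c| := by positivity
    exact mul_le_mul_of_nonneg_left (mul_le_mul_of_nonneg_right h2 h1) h4
  · filter_upwards [ae_restrict_mem measurableSet_Ioi] with t ht x _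
    have ht' : (0:ℝ) < t := ht
    have hd : HasDerivAt (fun x : ℝ => -t ^ 2 - 2 * x * t) (-2 * t) x := by
      have h0 : (fun x : ℝ => -t ^ 2 - 2 * x * t) = fun x => (-2 * t) * x + (-t ^ 2) :=
        funext fun x => by ring
      rw [h0]
      simpa using ((hasDerivAt_id x).const_mul (-2 * t)).add_const (-t ^ 2)
    have := ((hd.exp.mul_const (t ^ q)).const_mul c)
    refine this.congr_deriv ?_
    rw [Real.rpow_add_one (ne_of_gt ht')]
    ring


lemma keyFTC (ν x : ℝ) (hν : -1 < ν) :
    ∫ t in Ioi (0:ℝ), Real.exp (-t ^ 2 - 2 * x * t) *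
      (4 * t ^ (ν + 2) + 4 * x * t ^ (ν + 1) - 2 * (ν + 1) * t ^ ν) = 0 := by
  set g : ℝ → ℝ := fun t => -2 * (Real.exp (-t ^ 2 - 2 * x * t) * t ^ (ν + 1)) with hg
  have hcont : ContinuousWithinAt g (Ici 0) 0 := by
    have h1 : ContinuousAt (fun t : ℝ => Real.exp (-t ^ 2 - 2 * x * t)) 0 :=
      Continuous.continuousAt (by continuity)
    have h2 : ContinuousAt (fun t : ℝ => t ^ (ν + 1)) 0 :=
      Real.continuousAt_rpow_const 0 (ν + 1) (Or.inr (by linarith))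
    exact (continuousAt_const.mul (h1.mul h2)).continuousWithinAt
  have hderiv : ∀ t ∈ Ioi (0:ℝ), HasDerivAt g
      (Real.exp (-t ^ 2 - 2 * x * t) *
        (4 * t ^ (ν + 2) + 4 * x * t ^ (ν + 1) - 2 * (ν + 1) * t ^ ν)) t := by
    intro t ht
    have ht' : (0:ℝ) < t := ht
    have h1 : HasDerivAt (fun t : ℝ => -t ^ 2 - 2 * x * t) (-(2 * t) - 2 * x) t := by
      exact ((hasDerivAt_pow 2 t).neg.sub ((hasDerivAt_id t).const_mul (2 * x))).congr_deriv (by simp)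
    have h3 : HasDerivAt (fun t : ℝ => t ^ (ν + 1)) ((ν + 1) * t ^ (ν + 1 - 1)) t :=
      Real.hasDerivAt_rpow_const (Or.inl (ne_of_gt ht'))
    have := (h1.exp.mul h3).const_mul (-2)
    refine this.congr_deriv ?_
    rw [show ν + 1 - 1 = ν by ring, show ν + 2 = (ν + 1) + 1 by ring,
      Real.rpow_add_one (ne_of_gt ht') (ν + 1)]
    ring
  have f'int : IntegrableOn (fun t : ℝ => Real.exp (-t ^ 2 - 2 * x * t) *
      (4 * t ^ (ν + 2) + 4 * x * t ^ (ν + 1) - 2 * (ν + 1) * t ^ ν)) (Ioi 0) := by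
    have e1 := (aux_integrable (ν + 2) x (by linarith)).const_mul 4
    have e2 := (aux_integrable (ν + 1) x (by linarith)).const_mul (4 * x)
    have e3 := (aux_integrable ν x hν).const_mul (2 * (ν + 1))
    have heq : (fun t : ℝ => Real.exp (-t ^ 2 - 2 * x * t) *
        (4 * t ^ (ν + 2) + 4 * x * t ^ (ν + 1) - 2 * (ν + 1) * t ^ ν)) =
        fun t => (4 * (Real.exp (-t ^ 2 - 2 * x * t) * t ^ (ν + 2)) +
          4 * x * (Real.exp (-t ^ 2 - 2 * x * t) * t ^ (ν + 1))) -
          2 * (ν + 1) * (Real.exp (-t ^ 2 - 2 * x * t) * t ^ ν) := funext fun t => by ring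
    rw [heq]
    exact (e1.add e2).sub e3
  have htend : Tendsto g atTop (𝓝 0) := by
    have h0 : Tendsto (fun t : ℝ => Real.exp ((1 - 2 * x) ^ 2 / 4) *
        (t ^ (ν + 1) * Real.exp (-1 * t))) atTop (𝓝 0) := by
      simpa using (tendsto_rpow_mul_exp_neg_mul_atTop_nhds_zero (ν + 1) 1 one_pos).const_mul
        (Real.exp ((1 - 2 * x) ^ 2 / 4))
    have hsq : Tendsto (fun t : ℝ => Real.exp (-t ^ 2 - 2 * x * t) * t ^ (ν + 1)) atTop (𝓝 0) := by
      apply squeeze_zero' ?_ ?_ h0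
      · filter_upwards [eventually_gt_atTop (0:ℝ)] with t ht
        positivity
      · filter_upwards [eventually_gt_atTop (0:ℝ)] with t ht
        have h1 : (0:ℝ) ≤ t ^ (ν + 1) := Real.rpow_nonneg ht.le _
        have h2 : Real.exp (-t ^ 2 - 2 * x * t) ≤
            Real.exp ((1 - 2 * x) ^ 2 / 4) * Real.exp (-1 * t) := by
          rw [← Real.exp_add]
          apply Real.exp_le_exp.2
          nlinarith [sq_nonneg (t - (1 - 2 * x) / 2)]
        calc Real.exp (-t ^ 2 - 2 * x * t) * t ^ (ν + 1)
            ≤ (Real.exp ((1 - 2 * x) ^ 2 / 4) * Real.exp (-1 * t)) * t ^ (ν + 1) :=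
              mul_le_mul_of_nonneg_right h2 h1
          _ = Real.exp ((1 - 2 * x) ^ 2 / 4) * (t ^ (ν + 1) * Real.exp (-1 * t)) := by ring
    have := hsq.const_mul (-2)
    rw [mul_zero] at this
    exact this
  have := MeasureTheory.integral_Ioi_of_hasDerivAt_of_tendsto hcont hderiv f'int htend
  rw [this, hg]
  simp [Real.zero_rpow (show ν + 1 ≠ 0 by linarith)]

/-- for `α > −1`, the function
`w(x) = e^(−x²/2) · (1/Γ((1+α)/2)) ∫₀^∞ e^(−t² − 2xt) t^((α−1)/2) dt`
is twice differentiable on `ℝ` and satisfies `w″ = (x² + α) w`. -/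
theorem stmt13 (α : ℝ) (hα : -1 < α) :
    ∃ w' : ℝ → ℝ,
      (∀ x : ℝ, HasDerivAt
        (fun x : ℝ => Real.exp (-x ^ 2 / 2) * (1 / Real.Gamma ((1 + α) / 2)) *
          ∫ t in Set.Ioi (0 : ℝ), Real.exp (-t ^ 2 - 2 * x * t) * t ^ ((α - 1) / 2))
        (w' x) x) ∧
      (∀ x : ℝ, HasDerivAt w'
        ((x ^ 2 + α) *
          (Real.exp (-x ^ 2 / 2) * (1 / Real.Gamma ((1 + α) / 2)) *
            ∫ t in Set.Ioi (0 : ℝ), Real.exp (-t ^ 2 - 2 * x * t) * t ^ ((α - 1) / 2)))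
        x) := by
  have hν : -1 < (α - 1) / 2 := by linarith
  have hx2 : ∀ x : ℝ, HasDerivAt (fun x : ℝ => -x ^ 2 / 2) (-x) x := by
    intro x
    have := ((hasDerivAt_pow 2 x).neg).div_const 2
    refine this.congr_deriv ?_
    push_cast
    ring
  have hA : ∀ x : ℝ, HasDerivAt
      (fun x : ℝ => Real.exp (-x ^ 2 / 2) * (1 / Real.Gamma ((1 + α) / 2)))
      (Real.exp (-x ^ 2 / 2) * (-x) * (1 / Real.Gamma ((1 + α) / 2))) x :=
    fun x => (hx2 x).exp.mul_const _
  have hI : ∀ y : ℝ, HasDerivAt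
      (fun x : ℝ => ∫ t in Set.Ioi (0 : ℝ), Real.exp (-t ^ 2 - 2 * x * t) * t ^ ((α - 1) / 2))
      (∫ t in Set.Ioi (0 : ℝ), -2 * (Real.exp (-t ^ 2 - 2 * y * t) * t ^ ((α - 1) / 2 + 1)))
      y := by
    intro y
    have h := keyD 1 ((α - 1) / 2) hν y
    simpa only [one_mul, mul_one] using h
  refine ⟨fun x : ℝ => Real.exp (-x ^ 2 / 2) * (1 / Real.Gamma ((1 + α) / 2)) *
      ((∫ t in Set.Ioi (0 : ℝ), -2 * (Real.exp (-t ^ 2 - 2 * x * t) * t ^ ((α - 1) / 2 + 1))) -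
        x * ∫ t in Set.Ioi (0 : ℝ), Real.exp (-t ^ 2 - 2 * x * t) * t ^ ((α - 1) / 2)),
    fun x => ?_, fun x => ?_⟩
  · have hw := (hA x).mul (hI x)
    refine hw.congr_deriv ?_
    ring
  · have hJd := keyD (-2) ((α - 1) / 2 + 1) (by linarith) x
    rw [show (α - 1) / 2 + 1 + 1 = (α - 1) / 2 + 2 from by ring,
      show (-2 : ℝ) * -2 = (4 : ℝ) from by norm_num] at hJd
    have hxI : HasDerivAt (fun y : ℝ => y *
        ∫ t in Set.Ioi (0 : ℝ), Real.exp (-t ^ 2 - 2 * y * t) * t ^ ((α - 1) / 2))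
        (1 * (∫ t in Set.Ioi (0 : ℝ), Real.exp (-t ^ 2 - 2 * x * t) * t ^ ((α - 1) / 2)) +
          x * ∫ t in Set.Ioi (0 : ℝ),
            -2 * (Real.exp (-t ^ 2 - 2 * x * t) * t ^ ((α - 1) / 2 + 1))) x :=
      (hasDerivAt_id x).mul (hI x)
    have hw' := (hA x).mul (hJd.sub hxI)
    have h0 := keyFTC ((α - 1) / 2) x hν
    have heq : (fun t : ℝ => Real.exp (-t ^ 2 - 2 * x * t) *
        (4 * t ^ ((α - 1) / 2 + 2) + 4 * x * t ^ ((α - 1) / 2 + 1) -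
          2 * ((α - 1) / 2 + 1) * t ^ ((α - 1) / 2))) =
        fun t : ℝ => (4 * (Real.exp (-t ^ 2 - 2 * x * t) * t ^ ((α - 1) / 2 + 2)) +
          (4 * x) * (Real.exp (-t ^ 2 - 2 * x * t) * t ^ ((α - 1) / 2 + 1))) -
          ((1 + α) * (Real.exp (-t ^ 2 - 2 * x * t) * t ^ ((α - 1) / 2))) :=
      funext fun t => by ring
    have e1 := (aux_integrable ((α - 1) / 2 + 2) x (by linarith)).const_mul (4 : ℝ)
    have e2 := (aux_integrable ((α - 1) / 2 + 1) x (by linarith)).const_mul (4 * x)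
    have e3 := (aux_integrable ((α - 1) / 2) x hν).const_mul (1 + α)
    have e12 : Integrable (fun t : ℝ =>
        4 * (Real.exp (-t ^ 2 - 2 * x * t) * t ^ ((α - 1) / 2 + 2)) +
          (4 * x) * (Real.exp (-t ^ 2 - 2 * x * t) * t ^ ((α - 1) / 2 + 1)))
        (volume.restrict (Ioi 0)) := e1.add e2
    rw [heq, MeasureTheory.integral_sub e12 e3,
      MeasureTheory.integral_add e1 e2] at h0
    simp only [MeasureTheory.integral_const_mul] at h0
    refine hw'.congr_deriv ?_
    simp only [MeasureTheory.integral_const_mul, Pi.sub_apply]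
    linear_combination (Real.exp (-x ^ 2 / 2) * (1 / Real.Gamma ((1 + α) / 2))) * h0
end

section
/- Let λ > 0. Define u : (0,∞) → ℝ by u(x) := √x · I(1/6, (√λ/3)·x³), where I(ν,z) := (1/π)·∫₀^π exp(z·cos θ)·cos(ν·θ) dθ − (sin(νπ)/π)·∫₀^∞ exp(−z·cosh t − ν·t) dt. Then u is twice differentiable on (0,∞) and satisfies u″(x) = λ·x⁴·u(x) for every x > 0. -/
open Set Real

/-- Modified Bessel function of the first kind (integral representation):
`I(ν, z) = (1/π) ∫₀^π e^(z cos θ) cos(ν θ) dθ − (sin(νπ)/π) ∫₀^∞ e^(−z cosh t − νt) dt`. -/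
noncomputable def besselI (ν z : ℝ) : ℝ :=
  (1 / π) * (∫ θ in (0 : ℝ)..π, Real.exp (z * Real.cos θ) * Real.cos (ν * θ)) -
    (Real.sin (ν * π) / π) *
      ∫ t in Set.Ioi (0 : ℝ), Real.exp (-z * Real.cosh t - ν * t)

section Aux

open MeasureTheory Filter

namespace S14

lemma cosh_ge (t : ℝ) : (1 + t)/2 ≤ Real.cosh t := by
  have h := Real.add_one_le_exp t
  have h2 : 0 < Real.exp (-t) := Real.exp_pos _
  rw [Real.cosh_eq]; linarith

lemma coshk_exp_bound {b : ℝ} (hb : 0 < b) {k : ℕ} (hk : k ≤ 2) {t : ℝ} (ht : 0 ≤ t) :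
    Real.cosh t ^ k * Real.exp (-b * Real.cosh t) ≤ (4/b)^k * Real.exp (-(b/4) * t) := by
  have hy : (0:ℝ) < Real.cosh t := Real.cosh_pos t
  have h1 : Real.cosh t ^ k ≤ (4/b)^k * Real.exp (b/2 * Real.cosh t) := by
    interval_cases k
    · simpa using Real.one_le_exp (by positivity)
    · have := Real.add_one_le_exp (b/2 * Real.cosh t)
      rw [pow_one, pow_one, div_mul_eq_mul_div, le_div_iff₀ hb]
      nlinarith [mul_pos hb hy]
    · have h := Real.add_one_le_exp (b/4 * Real.cosh t)
      have he : Real.exp (b/2 * Real.cosh t) = Real.exp (b/4 * Real.cosh t) ^ 2 := by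
        rw [← Real.exp_nat_mul]; ring_nf
      rw [he]
      have h3 : b/4 * Real.cosh t ≤ Real.exp (b/4 * Real.cosh t) := by nlinarith
      have h4 : (0:ℝ) ≤ b/4 * Real.cosh t := by positivity
      calc Real.cosh t ^ 2 = (4/b)^2 * (b/4 * Real.cosh t)^2 := by field_simp
        _ ≤ (4/b)^2 * Real.exp (b/4 * Real.cosh t) ^ 2 := by
            apply mul_le_mul_of_nonneg_left _ (by positivity)
            exact pow_le_pow_left₀ h4 h3 2
  have h2 : Real.exp (-(b/2) * Real.cosh t) ≤ Real.exp (-(b/4) * t) := by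
    apply Real.exp_le_exp.2
    have := cosh_ge t
    nlinarith
  calc Real.cosh t ^ k * Real.exp (-b * Real.cosh t)
      ≤ ((4/b)^k * Real.exp (b/2 * Real.cosh t)) * Real.exp (-b * Real.cosh t) := by
        exact mul_le_mul_of_nonneg_right h1 (Real.exp_pos _).le
    _ = (4/b)^k * Real.exp (-(b/2) * Real.cosh t) := by
        rw [mul_assoc, ← Real.exp_add]; ring_nf
    _ ≤ (4/b)^k * Real.exp (-(b/4) * t) := by
        exact mul_le_mul_of_nonneg_left h2 (by positivity)

lemma B_int {ν : ℝ} (hν : 0 ≤ ν) {z : ℝ} (hz : 0 < z) {k : ℕ} (hk : k ≤ 2) :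
    IntegrableOn (fun t => Real.cosh t ^ k * Real.exp (-z * Real.cosh t - ν * t)) (Ioi (0:ℝ)) := by
  apply Integrable.mono' ((exp_neg_integrableOn_Ioi (0:ℝ) (b := z/4) (by positivity)).const_mul ((4/z)^k))
  · exact (Continuous.aestronglyMeasurable (by continuity)).restrict
  · rw [ae_restrict_iff' measurableSet_Ioi]
    filter_upwards with t ht
    have ht' : (0:ℝ) ≤ t := le_of_lt ht
    have hc : (0:ℝ) < Real.cosh t := Real.cosh_pos t
    rw [Real.norm_eq_abs, abs_of_nonneg (by positivity)]
    calc Real.cosh t ^ k * Real.exp (-z * Real.cosh t - ν * t)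
        ≤ Real.cosh t ^ k * Real.exp (-z * Real.cosh t) := by
          apply mul_le_mul_of_nonneg_left _ (by positivity)
          apply Real.exp_le_exp.2; nlinarith
      _ ≤ (4/z)^k * Real.exp (-(z/4) * t) := coshk_exp_bound hz hk ht'


noncomputable def B (ν : ℝ) (k : ℕ) (z : ℝ) : ℝ :=
  ∫ t in Set.Ioi (0:ℝ), Real.cosh t ^ k * Real.exp (-z * Real.cosh t - ν * t)

noncomputable def A (ν : ℝ) (k : ℕ) (z : ℝ) : ℝ :=
  ∫ θ in (0:ℝ)..π, Real.cos θ ^ k * (Real.exp (z * Real.cos θ) * Real.cos (ν * θ))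

lemma hasDerivAt_B {ν : ℝ} (hν : 0 ≤ ν) {k : ℕ} (hk : k + 1 ≤ 2) {z : ℝ} (hz : 0 < z) :
    HasDerivAt (B ν k) (-(B ν (k+1) z)) z := by
  have key := hasDerivAt_integral_of_dominated_loc_of_deriv_le
    (μ := volume.restrict (Ioi (0:ℝ)))
    (F := fun x t => Real.cosh t ^ k * Real.exp (-x * Real.cosh t - ν * t))
    (F' := fun x t => -(Real.cosh t ^ (k+1) * Real.exp (-x * Real.cosh t - ν * t)))
    (x₀ := z) (s := Metric.ball z (z/2))
    (bound := fun t => (4/(z/2))^(k+1) * Real.exp (-((z/2)/4) * t))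
    (Metric.ball_mem_nhds z (by positivity))
    (Eventually.of_forall fun x => (Continuous.aestronglyMeasurable (by continuity)).restrict)
    (B_int hν hz (le_trans (Nat.le_succ k) hk))
    ((Continuous.aestronglyMeasurable (by continuity)).restrict)
    ?_ ?_ ?_
  · have h2 : ∫ t in Ioi (0:ℝ), -(Real.cosh t ^ (k+1) * Real.exp (-z * Real.cosh t - ν * t))
        = -(B ν (k+1) z) := by rw [integral_neg]; rfl
    rw [h2] at key
    exact key.2
  · rw [ae_restrict_iff' measurableSet_Ioi]
    filter_upwards with t ht x hx
    have ht' : (0:ℝ) ≤ t := le_of_lt ht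
    have hc : (0:ℝ) < Real.cosh t := Real.cosh_pos t
    have hx' : z/2 < x := by
      have := abs_lt.1 (mem_ball_iff_norm.1 hx); linarith [this.1]
    rw [norm_neg, Real.norm_eq_abs, abs_of_nonneg (by positivity)]
    calc Real.cosh t ^ (k+1) * Real.exp (-x * Real.cosh t - ν * t)
        ≤ Real.cosh t ^ (k+1) * Real.exp (-(z/2) * Real.cosh t) := by
          apply mul_le_mul_of_nonneg_left _ (by positivity)
          apply Real.exp_le_exp.2
          nlinarith [mul_nonneg hν ht']
      _ ≤ (4/(z/2))^(k+1) * Real.exp (-((z/2)/4) * t) := coshk_exp_bound (by positivity) hk ht'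
  · exact ((exp_neg_integrableOn_Ioi (0:ℝ) (b := (z/2)/4) (by positivity)).const_mul _)
  · filter_upwards with t x hx
    have h1 : HasDerivAt (fun x : ℝ => -x * Real.cosh t - ν * t) (-Real.cosh t) x := by
      simpa using ((hasDerivAt_id x).neg.mul_const (Real.cosh t)).sub_const (ν * t)
    have := (h1.exp.const_mul (Real.cosh t ^ k))
    refine this.congr_deriv (Eq.symm ?_)
    rw [pow_succ]; ring

lemma hasDerivAt_A (ν : ℝ) (k : ℕ) (z : ℝ) : HasDerivAt (A ν k) (A ν (k+1) z) z := by
  have key := intervalIntegral.hasDerivAt_integral_of_dominated_loc_of_deriv_le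
    (μ := volume) (a := (0:ℝ)) (b := π)
    (F := fun x θ => Real.cos θ ^ k * (Real.exp (x * Real.cos θ) * Real.cos (ν * θ)))
    (F' := fun x θ => Real.cos θ ^ (k+1) * (Real.exp (x * Real.cos θ) * Real.cos (ν * θ)))
    (x₀ := z) (s := Metric.ball z 1)
    (bound := fun _ => Real.exp (|z| + 1))
    (Metric.ball_mem_nhds z one_pos)
    (Eventually.of_forall fun x => (Continuous.aestronglyMeasurable (by continuity)).restrict)
    (Continuous.intervalIntegrable (by continuity) 0 π)
    ((Continuous.aestronglyMeasurable (by continuity)).restrict)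
    ?_ (intervalIntegrable_const) ?_
  · exact key.2
  · filter_upwards with θ hθ x hx
    have hx' : |x| ≤ |z| + 1 := by
      have h : |x - z| < 1 := by simpa [Real.norm_eq_abs] using mem_ball_iff_norm.1 hx
      linarith [abs_sub_abs_le_abs_sub x z]
    have hcos : |Real.cos θ| ≤ 1 := Real.abs_cos_le_one θ
    have hcosn : |Real.cos (ν*θ)| ≤ 1 := Real.abs_cos_le_one _
    have he : Real.exp (x * Real.cos θ) ≤ Real.exp (|z| + 1) := by
      apply Real.exp_le_exp.2
      calc x * Real.cos θ ≤ |x * Real.cos θ| := le_abs_self _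
        _ = |x| * |Real.cos θ| := abs_mul _ _
        _ ≤ (|z|+1) * 1 := by
            apply mul_le_mul hx' hcos (abs_nonneg _) (by positivity)
        _ = |z| + 1 := mul_one _
    rw [Real.norm_eq_abs, abs_mul, abs_mul]
    calc |Real.cos θ ^ (k+1)| * (|Real.exp (x * Real.cos θ)| * |Real.cos (ν*θ)|)
        ≤ 1 * (Real.exp (|z|+1) * 1) := by
          apply mul_le_mul
          · rw [abs_pow]; exact pow_le_one₀ (abs_nonneg _) hcos
          · rw [abs_of_pos (Real.exp_pos _)]
            exact mul_le_mul he hcosn (abs_nonneg _) (Real.exp_pos _).le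
          · positivity
          · norm_num
      _ = Real.exp (|z|+1) := by ring
  · filter_upwards with θ hθ x hx
    have h1 : HasDerivAt (fun x : ℝ => x * Real.cos θ) (Real.cos θ) x := by
      simpa using (hasDerivAt_id x).mul_const (Real.cos θ)
    have := (h1.exp.mul_const (Real.cos (ν * θ))).const_mul (Real.cos θ ^ k)
    refine this.congr_deriv (Eq.symm ?_)
    rw [pow_succ]; ring


lemma ftc_A (ν z : ℝ) :
    z^2 * A ν 2 z + z * A ν 1 z - (z^2 + ν^2) * A ν 0 z
      = -(ν * Real.sin (ν * π) * Real.exp (-z)) := by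
  have hG : ∀ θ ∈ uIcc (0:ℝ) π, HasDerivAt
      (fun θ => z * Real.sin θ * Real.exp (z * Real.cos θ) * Real.cos (ν * θ)
        - ν * Real.exp (z * Real.cos θ) * Real.sin (ν * θ))
      (z^2 * (Real.cos θ ^ 2 * (Real.exp (z * Real.cos θ) * Real.cos (ν * θ)))
        + z * (Real.cos θ ^ 1 * (Real.exp (z * Real.cos θ) * Real.cos (ν * θ)))
        - (z^2 + ν^2) * (Real.cos θ ^ 0 * (Real.exp (z * Real.cos θ) * Real.cos (ν * θ)))) θ := by
    intro θ _
    have hsin : HasDerivAt (fun θ => z * Real.sin θ) (z * Real.cos θ) θ :=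
      (Real.hasDerivAt_sin θ).const_mul z
    have hexp : HasDerivAt (fun θ => Real.exp (z * Real.cos θ))
        (Real.exp (z * Real.cos θ) * (z * -Real.sin θ)) θ :=
      ((Real.hasDerivAt_cos θ).const_mul z).exp
    have hmulin : HasDerivAt (fun θ : ℝ => ν * θ) (ν * 1) θ := (hasDerivAt_id θ).const_mul ν
    have hcosn : HasDerivAt (fun θ => Real.cos (ν * θ)) (-Real.sin (ν * θ) * (ν * 1)) θ :=
      (Real.hasDerivAt_cos (ν * θ)).comp θ hmulin
    have hsinn : HasDerivAt (fun θ => Real.sin (ν * θ)) (Real.cos (ν * θ) * (ν * 1)) θ :=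
      (Real.hasDerivAt_sin (ν * θ)).comp θ hmulin
    have H := ((hsin.mul hexp).mul hcosn).sub ((hexp.const_mul ν).mul hsinn)
    refine H.congr_deriv (Eq.symm ?_)
    have hs := Real.sin_sq_add_cos_sq θ
    simp only [pow_zero, pow_one, one_mul, Pi.mul_apply]
    linear_combination (z^2 * Real.exp (z * Real.cos θ) * Real.cos (ν * θ)) * hs
  have hc2 : IntervalIntegrable (fun θ => z^2 * (Real.cos θ ^ 2 * (Real.exp (z * Real.cos θ) * Real.cos (ν * θ)))) volume 0 π :=
    Continuous.intervalIntegrable (by fun_prop) 0 π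
  have hc1 : IntervalIntegrable (fun θ => z * (Real.cos θ ^ 1 * (Real.exp (z * Real.cos θ) * Real.cos (ν * θ)))) volume 0 π :=
    Continuous.intervalIntegrable (by fun_prop) 0 π
  have hc0 : IntervalIntegrable (fun θ => (z^2 + ν^2) * (Real.cos θ ^ 0 * (Real.exp (z * Real.cos θ) * Real.cos (ν * θ)))) volume 0 π :=
    Continuous.intervalIntegrable (by fun_prop) 0 π
  have hii : IntervalIntegrable (fun θ =>
      z^2 * (Real.cos θ ^ 2 * (Real.exp (z * Real.cos θ) * Real.cos (ν * θ)))
        + z * (Real.cos θ ^ 1 * (Real.exp (z * Real.cos θ) * Real.cos (ν * θ)))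
        - (z^2 + ν^2) * (Real.cos θ ^ 0 * (Real.exp (z * Real.cos θ) * Real.cos (ν * θ))))
      volume 0 π := Continuous.intervalIntegrable (by fun_prop) 0 π
  have key := intervalIntegral.integral_eq_sub_of_hasDerivAt hG hii
  have e1 : (∫ θ in (0:ℝ)..π,
      (z^2 * (Real.cos θ ^ 2 * (Real.exp (z * Real.cos θ) * Real.cos (ν * θ)))
        + z * (Real.cos θ ^ 1 * (Real.exp (z * Real.cos θ) * Real.cos (ν * θ)))
        - (z^2 + ν^2) * (Real.cos θ ^ 0 * (Real.exp (z * Real.cos θ) * Real.cos (ν * θ)))))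
      = ((∫ θ in (0:ℝ)..π, z^2 * (Real.cos θ ^ 2 * (Real.exp (z * Real.cos θ) * Real.cos (ν * θ))))
        + ∫ θ in (0:ℝ)..π, z * (Real.cos θ ^ 1 * (Real.exp (z * Real.cos θ) * Real.cos (ν * θ))))
        - ∫ θ in (0:ℝ)..π, (z^2 + ν^2) * (Real.cos θ ^ 0 * (Real.exp (z * Real.cos θ) * Real.cos (ν * θ))) := by
    rw [intervalIntegral.integral_sub (hc2.add hc1) hc0, intervalIntegral.integral_add hc2 hc1]
  rw [e1, intervalIntegral.integral_const_mul, intervalIntegral.integral_const_mul,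
    intervalIntegral.integral_const_mul] at key
  show z^2 * A ν 2 z + z * A ν 1 z - (z^2 + ν^2) * A ν 0 z = _
  unfold A
  rw [key]
  simp [Real.sin_pi, Real.cos_pi]
  ring

lemma ftc_B {ν : ℝ} (hν : 0 ≤ ν) {z : ℝ} (hz : 0 < z) :
    z^2 * B ν 2 z - z * B ν 1 z - (z^2 + ν^2) * B ν 0 z = -(ν * Real.exp (-z)) := by
  have hderiv : ∀ t ∈ Ici (0:ℝ), HasDerivAt
      (fun t => (ν - z * Real.sinh t) * Real.exp (-z * Real.cosh t - ν * t))
      (z^2 * (Real.cosh t ^ 2 * Real.exp (-z * Real.cosh t - ν * t))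
        - z * (Real.cosh t ^ 1 * Real.exp (-z * Real.cosh t - ν * t))
        - (z^2 + ν^2) * (Real.cosh t ^ 0 * Real.exp (-z * Real.cosh t - ν * t))) t := by
    intro t _
    have h1 : HasDerivAt (fun t => ν - z * Real.sinh t) (-(z * Real.cosh t)) t :=
      (((Real.hasDerivAt_sinh t).const_mul z)).neg.const_add ν
    have h2 : HasDerivAt (fun t => -z * Real.cosh t - ν * t) (-z * Real.sinh t - ν * 1) t :=
      (((Real.hasDerivAt_cosh t).const_mul (-z))).sub ((hasDerivAt_id t).const_mul ν)
    have H := h1.mul h2.exp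
    refine H.congr_deriv (Eq.symm ?_)
    simp only [pow_zero, pow_one, one_mul]
    linear_combination (z^2 * Real.exp (-z * Real.cosh t - ν * t)) * (Real.cosh_sq_sub_sinh_sq t)
  have h0' := B_int hν hz (k := 0) (by norm_num)
  have h1' := B_int hν hz (k := 1) (by norm_num)
  have h2' := B_int hν hz (k := 2) (by norm_num)
  have hfg : IntegrableOn (fun t =>
      z^2 * (Real.cosh t ^ 2 * Real.exp (-z * Real.cosh t - ν * t))
        - z * (Real.cosh t ^ 1 * Real.exp (-z * Real.cosh t - ν * t))) (Ioi (0:ℝ)) :=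
    (h2'.const_mul (z^2)).sub (h1'.const_mul z)
  have hint : IntegrableOn (fun t =>
      z^2 * (Real.cosh t ^ 2 * Real.exp (-z * Real.cosh t - ν * t))
        - z * (Real.cosh t ^ 1 * Real.exp (-z * Real.cosh t - ν * t))
        - (z^2 + ν^2) * (Real.cosh t ^ 0 * Real.exp (-z * Real.cosh t - ν * t))) (Ioi (0:ℝ)) :=
    hfg.sub (h0'.const_mul (z^2 + ν^2))
  have htend : Tendsto (fun t => (ν - z * Real.sinh t) * Real.exp (-z * Real.cosh t - ν * t))
      atTop (nhds 0) := by
    apply squeeze_zero_norm' (a := fun t => (ν + z * (4/z)) * Real.exp (-(z/4) * t))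
    · filter_upwards [eventually_ge_atTop (0:ℝ)] with t ht
      have hc : (0:ℝ) < Real.cosh t := Real.cosh_pos t
      have hsh : 0 ≤ Real.sinh t := Real.sinh_nonneg_iff.2 ht
      have hsc : Real.sinh t ≤ Real.cosh t := by
        rw [Real.sinh_eq, Real.cosh_eq]; have := Real.exp_pos (-t); linarith
      have he1 : Real.exp (-z * Real.cosh t - ν * t) ≤ Real.exp (-z * Real.cosh t) := by
        apply Real.exp_le_exp.2; nlinarith [mul_nonneg hν ht]
      rw [Real.norm_eq_abs, abs_mul, abs_of_pos (Real.exp_pos _)]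
      have habs : |ν - z * Real.sinh t| ≤ ν + z * Real.cosh t := by
        rw [abs_le]; constructor <;> nlinarith [mul_nonneg hz.le hsh]
      calc |ν - z * Real.sinh t| * Real.exp (-z * Real.cosh t - ν * t)
          ≤ (ν + z * Real.cosh t) * Real.exp (-z * Real.cosh t) := by
            apply mul_le_mul habs he1 (Real.exp_pos _).le
            positivity
        _ = ν * (Real.cosh t ^ 0 * Real.exp (-z * Real.cosh t))
            + z * (Real.cosh t ^ 1 * Real.exp (-z * Real.cosh t)) := by
            simp only [pow_zero, pow_one, one_mul]; ring
        _ ≤ ν * ((4/z)^0 * Real.exp (-(z/4)*t)) + z * ((4/z)^1 * Real.exp (-(z/4)*t)) := by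
            apply add_le_add
            · exact mul_le_mul_of_nonneg_left (coshk_exp_bound hz (by norm_num) ht) hν
            · exact mul_le_mul_of_nonneg_left (coshk_exp_bound hz (by norm_num) ht) hz.le
        _ = (ν + z * (4/z)) * Real.exp (-(z/4) * t) := by
            simp only [pow_zero, pow_one, one_mul]; ring
    · rw [show (0:ℝ) = (ν + z * (4/z)) * 0 by ring]
      apply Tendsto.const_mul
      have h1 : Tendsto (fun t : ℝ => (z/4) * t) atTop atTop :=
        Tendsto.const_mul_atTop (by positivity) tendsto_id
      have h2 := (Real.tendsto_exp_neg_atTop_nhds_zero).comp h1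
      convert h2 using 2 with t
      simp only [Function.comp]
      ring_nf
  have key := integral_Ioi_of_hasDerivAt_of_tendsto' hderiv hint htend
  have e1 : (∫ t in Ioi (0:ℝ),
      (z^2 * (Real.cosh t ^ 2 * Real.exp (-z * Real.cosh t - ν * t))
        - z * (Real.cosh t ^ 1 * Real.exp (-z * Real.cosh t - ν * t))
        - (z^2 + ν^2) * (Real.cosh t ^ 0 * Real.exp (-z * Real.cosh t - ν * t))))
      = ((∫ t in Ioi (0:ℝ), z^2 * (Real.cosh t ^ 2 * Real.exp (-z * Real.cosh t - ν * t)))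
        - ∫ t in Ioi (0:ℝ), z * (Real.cosh t ^ 1 * Real.exp (-z * Real.cosh t - ν * t)))
        - ∫ t in Ioi (0:ℝ), (z^2 + ν^2) * (Real.cosh t ^ 0 * Real.exp (-z * Real.cosh t - ν * t)) := by
    rw [integral_sub hfg (h0'.const_mul _), integral_sub (h2'.const_mul _) (h1'.const_mul _)]
  rw [e1, integral_const_mul, integral_const_mul, integral_const_mul] at key
  show z^2 * B ν 2 z - z * B ν 1 z - (z^2 + ν^2) * B ν 0 z = _
  unfold B
  rw [key]
  simp [Real.cosh_zero, Real.sinh_zero]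

noncomputable def F1 (ν z : ℝ) : ℝ := (1/π) * A ν 1 z + (Real.sin (ν*π)/π) * B ν 1 z
noncomputable def F2 (ν z : ℝ) : ℝ := (1/π) * A ν 2 z - (Real.sin (ν*π)/π) * B ν 2 z

lemma besselI_eq (ν z : ℝ) : besselI ν z = (1/π) * A ν 0 z - (Real.sin (ν*π)/π) * B ν 0 z := by
  unfold besselI A B
  simp [pow_zero, one_mul]

lemma hasDerivAt_besselI {ν : ℝ} (hν : 0 ≤ ν) {z : ℝ} (hz : 0 < z) :
    HasDerivAt (besselI ν) (F1 ν z) z := by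
  have h := ((hasDerivAt_A ν 0 z).const_mul (1/π)).sub
    ((hasDerivAt_B hν (k := 0) (by norm_num) hz).const_mul (Real.sin (ν*π)/π))
  have hfun : besselI ν = fun z => (1/π) * A ν 0 z - (Real.sin (ν*π)/π) * B ν 0 z :=
    funext fun z => besselI_eq ν z
  rw [hfun]
  refine h.congr_deriv (Eq.symm ?_)
  unfold F1; ring

lemma hasDerivAt_F1 {ν : ℝ} (hν : 0 ≤ ν) {z : ℝ} (hz : 0 < z) :
    HasDerivAt (F1 ν) (F2 ν z) z := by
  have h := ((hasDerivAt_A ν 1 z).const_mul (1/π)).add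
    ((hasDerivAt_B hν (k := 1) (by norm_num) hz).const_mul (Real.sin (ν*π)/π))
  refine h.congr_deriv (Eq.symm ?_)
  unfold F2; ring

lemma ode {ν : ℝ} (hν : 0 ≤ ν) {z : ℝ} (hz : 0 < z) :
    z^2 * F2 ν z + z * F1 ν z - (z^2 + ν^2) * besselI ν z = 0 := by
  rw [besselI_eq]
  unfold F1 F2
  linear_combination (1/π) * ftc_A ν z - (Real.sin (ν*π)/π) * ftc_B hν hz


end S14

end Aux

open S14 in
/-- for `λ > 0`, the function `u(x) = √x · I(1/6, (√λ/3) x³)` is twice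
differentiable on `(0,∞)` and satisfies `u″ = λ x⁴ u` there. -/
theorem stmt14 (lam : ℝ) (hlam : 0 < lam) :
    ∃ u' : ℝ → ℝ,
      (∀ x ∈ Ioi (0 : ℝ),
        HasDerivAt (fun x : ℝ => Real.sqrt x * besselI (1 / 6) (Real.sqrt lam / 3 * x ^ 3))
          (u' x) x) ∧
      (∀ x ∈ Ioi (0 : ℝ),
        HasDerivAt u'
          (lam * x ^ 4 * (Real.sqrt x * besselI (1 / 6) (Real.sqrt lam / 3 * x ^ 3)))
          x) := by
  have hν : (0:ℝ) ≤ 1/6 := by norm_num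
  set c : ℝ := Real.sqrt lam / 3 with hcdef
  have hc : 0 < c := by
    have := Real.sqrt_pos.2 hlam
    positivity
  refine ⟨fun x => 1 / (2 * Real.sqrt x) * besselI (1/6) (c * x^3)
      + Real.sqrt x * (F1 (1/6) (c * x^3) * (c * (3 * x^2))), ?_, ?_⟩
  · intro x hx
    have hx0 : (0:ℝ) < x := hx
    have hz : 0 < c * x^3 := by positivity
    have hcube : HasDerivAt (fun x : ℝ => c * x^3) (c * (3 * x^2)) x := by
      have := (hasDerivAt_pow 3 x).const_mul c
      norm_num at this
      convert this using 1 <;> ring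
    have hcomp : HasDerivAt (fun x : ℝ => besselI (1/6) (c * x^3))
        (F1 (1/6) (c * x^3) * (c * (3 * x^2))) x :=
      by have := (hasDerivAt_besselI hν hz).comp x hcube; exact this
    exact (Real.hasDerivAt_sqrt hx0.ne').mul hcomp
  · intro x hx
    have hx0 : (0:ℝ) < x := hx
    have hs0 : 0 < Real.sqrt x := Real.sqrt_pos.2 hx0
    have hz : 0 < c * x^3 := by positivity
    have hcube : HasDerivAt (fun x : ℝ => c * x^3) (c * (3 * x^2)) x := by
      have := (hasDerivAt_pow 3 x).const_mul c
      norm_num at this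
      convert this using 1 <;> ring
    have hcomp : HasDerivAt (fun x : ℝ => besselI (1/6) (c * x^3))
        (F1 (1/6) (c * x^3) * (c * (3 * x^2))) x :=
      by have := (hasDerivAt_besselI hν hz).comp x hcube; exact this
    have hcomp1 : HasDerivAt (fun x : ℝ => F1 (1/6) (c * x^3))
        (F2 (1/6) (c * x^3) * (c * (3 * x^2))) x :=
      by have := (hasDerivAt_F1 hν hz).comp x hcube; exact this
    -- derivative of 1/(2 √x)
    have h2s : HasDerivAt (fun x : ℝ => 2 * Real.sqrt x) (2 * (1 / (2 * Real.sqrt x))) x :=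
      (Real.hasDerivAt_sqrt hx0.ne').const_mul 2
    have h2sne : 2 * Real.sqrt x ≠ 0 := by positivity
    have hinv : HasDerivAt (fun x : ℝ => (2 * Real.sqrt x)⁻¹)
        (-(2 * (1 / (2 * Real.sqrt x))) / (2 * Real.sqrt x)^2) x := h2s.inv h2sne
    have hinv' : HasDerivAt (fun x : ℝ => 1 / (2 * Real.sqrt x))
        (-(2 * (1 / (2 * Real.sqrt x))) / (2 * Real.sqrt x)^2) x := by
      simpa [one_div] using hinv
    have hterm1 : HasDerivAt (fun x : ℝ => 1 / (2 * Real.sqrt x) * besselI (1/6) (c * x^3))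
        (-(2 * (1 / (2 * Real.sqrt x))) / (2 * Real.sqrt x)^2 * besselI (1/6) (c * x^3)
          + 1 / (2 * Real.sqrt x) * (F1 (1/6) (c * x^3) * (c * (3 * x^2)))) x :=
      hinv'.mul hcomp
    have hq : HasDerivAt (fun x : ℝ => c * (3 * x^2)) (c * (3 * (2 * x))) x := by
      have := ((hasDerivAt_pow 2 x).const_mul (3:ℝ)).const_mul c
      norm_num at this
      convert this using 1 <;> ring
    have hterm2 : HasDerivAt (fun x : ℝ => Real.sqrt x * (F1 (1/6) (c * x^3) * (c * (3 * x^2))))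
        (1 / (2 * Real.sqrt x) * (F1 (1/6) (c * x^3) * (c * (3 * x^2)))
          + Real.sqrt x * (F2 (1/6) (c * x^3) * (c * (3 * x^2)) * (c * (3 * x^2))
            + F1 (1/6) (c * x^3) * (c * (3 * (2 * x))))) x :=
      (Real.hasDerivAt_sqrt hx0.ne').mul (hcomp1.mul hq)
    have hsum := hterm1.add hterm2
    refine hsum.congr_deriv (Eq.symm ?_)
    -- algebraic identity using the ODE
    have hODE := ode hν hz
    set s := Real.sqrt x with hsdef
    have hs2 : s^2 = x := Real.sq_sqrt hx0.le
    set slam := Real.sqrt lam with hslamdef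
    have hl2 : slam^2 = lam := Real.sq_sqrt hlam.le
    set a := besselI (1/6) (c * x^3) with hadef
    set b := F1 (1/6) (c * x^3) with hbdef
    set e := F2 (1/6) (c * x^3) with hedef
    rw [hcdef] at hODE ⊢
    rw [← hs2] at hODE ⊢
    rw [← hl2]
    have hsne : s ≠ 0 := hs0.ne'
    have hslamne : slam ≠ 0 := by
      have : (0:ℝ) < slam := Real.sqrt_pos.2 hlam
      exact this.ne'
    field_simp
    linear_combination (-36) * hODE
end

section
/- Define v : ℝ → ℝ by v(x) := exp(−x²/2)·π^(−1/2)·∫₀^∞ exp(−t² − 2xt)·t^(−1/2) dt, and for b > 0 set W₁(b) := −v′(0)·(v(b) − b·v′(b)) − v(0)·v′(b). Then there exists a constant C > 0 such that |W₁(b) − √2| ≤ C·b³ for all b ∈ (0,1]. -/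
open Set Real MeasureTheory Filter

/-- `v(x) = e^(−x²/2) · H_{−1/2}(x)` via the integral representation
`H_{−1/2}(x) = π^(−1/2) ∫₀^∞ e^(−t² − 2xt) t^(−1/2) dt`. -/
noncomputable def vFun (x : ℝ) : ℝ :=
  Real.exp (-x ^ 2 / 2) * π ^ (-(1 / 2) : ℝ) *
    ∫ t in Set.Ioi (0 : ℝ), Real.exp (-t ^ 2 - 2 * x * t) * t ^ (-(1 / 2) : ℝ)

/-! ### Auxiliary integrals -/

noncomputable def Gfun (s x : ℝ) : ℝ :=
  ∫ t in Set.Ioi (0 : ℝ), Real.exp (-t ^ 2 - 2 * x * t) * t ^ s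

lemma contOn_integrand (s x : ℝ) :
    ContinuousOn (fun t : ℝ => Real.exp (-t ^ 2 - 2 * x * t) * t ^ s) (Ioi 0) := by
  apply ContinuousOn.mul
  · exact (Real.continuous_exp.comp (by continuity)).continuousOn
  · intro t ht
    exact (Real.continuousAt_rpow_const t s (Or.inl (ne_of_gt ht))).continuousWithinAt

lemma bound_integrable (s B : ℝ) (hs : -1 < s) :
    IntegrableOn (fun t : ℝ =>
      Real.exp (2 * B ^ 2) * (t ^ s * Real.exp (-(1/2) * t ^ 2))) (Ioi 0) :=
  (integrableOn_rpow_mul_exp_neg_mul_sq (by norm_num) hs).const_mul _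

lemma integrand_le (s : ℝ) {B x t : ℝ} (hx : |x| ≤ B) (ht : 0 < t) :
    ‖Real.exp (-t ^ 2 - 2 * x * t) * t ^ s‖ ≤
      Real.exp (2 * B ^ 2) * (t ^ s * Real.exp (-(1/2) * t ^ 2)) := by
  rw [norm_mul, Real.norm_eq_abs, Real.norm_eq_abs, abs_of_pos (Real.exp_pos _),
    abs_of_nonneg (Real.rpow_nonneg ht.le s),
    show Real.exp (2*B^2) * (t^s * Real.exp (-(1/2)*t^2))
      = (Real.exp (2*B^2) * Real.exp (-(1/2)*t^2)) * t^s by ring, ← Real.exp_add]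
  refine mul_le_mul_of_nonneg_right ?_ (Real.rpow_nonneg ht.le s)
  apply Real.exp_le_exp.2
  have h1 : (0:ℝ) ≤ (x + B) * t :=
    mul_nonneg (by linarith [neg_abs_le x]) ht.le
  nlinarith [sq_nonneg (t - 2*B)]

lemma intG (s x : ℝ) (hs : -1 < s) :
    IntegrableOn (fun t : ℝ => Real.exp (-t ^ 2 - 2 * x * t) * t ^ s) (Ioi 0) := by
  apply Integrable.mono' (bound_integrable s |x| hs)
    ((contOn_integrand s x).aestronglyMeasurable measurableSet_Ioi)
  filter_upwards [ae_restrict_mem measurableSet_Ioi] with t ht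
  exact integrand_le s le_rfl ht

lemma hasDerivAt_G (s : ℝ) (hs : -1 < s) (x : ℝ) :
    HasDerivAt (Gfun s) (-2 * Gfun (s + 1) x) x := by
  have key := hasDerivAt_integral_of_dominated_loc_of_deriv_le
    (F := fun y t => Real.exp (-t ^ 2 - 2 * y * t) * t ^ s)
    (F' := fun y t => (-2 : ℝ) * (Real.exp (-t ^ 2 - 2 * y * t) * t ^ (s + 1)))
    (x₀ := x) (s := Metric.ball x 1)
    (bound := fun t => 2 * (Real.exp (2 * (|x| + 1) ^ 2) *
      (t ^ (s + 1) * Real.exp (-(1/2) * t ^ 2)))) (Metric.ball_mem_nhds x one_pos)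
    (Filter.Eventually.of_forall fun y =>
      ((contOn_integrand s y).aestronglyMeasurable measurableSet_Ioi))
    (intG s x hs)
    (((contOn_integrand (s+1) x).aestronglyMeasurable measurableSet_Ioi).const_mul _)
    ?_ ((bound_integrable (s+1) (|x|+1) (by linarith)).const_mul 2) ?_
  · have h2 := key.2
    have e : (∫ a in Ioi (0:ℝ),
        (fun (y t : ℝ) => (-2 : ℝ) * (Real.exp (-t ^ 2 - 2 * y * t) * t ^ (s + 1))) x a)
        = -2 * Gfun (s + 1) x := by
      show (∫ t in Ioi (0:ℝ), (-2 : ℝ) * (Real.exp (-t ^ 2 - 2 * x * t) * t ^ (s + 1)))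
        = -2 * Gfun (s + 1) x
      rw [MeasureTheory.integral_const_mul]
      rfl
    rw [e] at h2
    exact h2
  · filter_upwards [ae_restrict_mem measurableSet_Ioi] with t ht
    intro y hy
    have hyx : |y| ≤ |x| + 1 := by
      have := abs_sub_abs_le_abs_sub y x
      have h2 : |y - x| < 1 := by simpa [Real.dist_eq] using hy
      linarith
    rw [norm_mul]
    have : ‖(-2 : ℝ)‖ = 2 := by norm_num
    rw [this]
    exact mul_le_mul_of_nonneg_left (integrand_le (s+1) hyx ht) (by norm_num)
  · filter_upwards [ae_restrict_mem measurableSet_Ioi] with t ht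
    intro y hy
    have h0 : HasDerivAt (fun y : ℝ => -t^2 - 2*y*t) (-(2*t)) y := by
      have h1 : HasDerivAt (fun y : ℝ => 2*y*t) (2*t) y := by
        simpa using ((hasDerivAt_id y).const_mul (2:ℝ)).mul_const t
      simpa using h1.const_sub (-t^2)
    have h2 := (h0.exp).mul_const (t ^ s)
    refine h2.congr_deriv ?_
    rw [Real.rpow_add_one (ne_of_gt ht)]
    ring

lemma G_nonneg (s x : ℝ) : 0 ≤ Gfun s x := by
  refine setIntegral_nonneg measurableSet_Ioi fun t ht => ?_
  exact mul_nonneg (Real.exp_pos _).le (Real.rpow_nonneg (le_of_lt ht) s)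

lemma G_mono (s : ℝ) (hs : -1 < s) {x : ℝ} (hx : 0 ≤ x) : Gfun s x ≤ Gfun s 0 := by
  refine setIntegral_mono_on (intG s x hs) (intG s 0 hs) measurableSet_Ioi fun t ht => ?_
  refine mul_le_mul_of_nonneg_right ?_ (Real.rpow_nonneg (le_of_lt ht) s)
  apply Real.exp_le_exp.2
  have ht0 : (0:ℝ) < t := mem_Ioi.mp ht
  nlinarith [mul_nonneg (mul_nonneg (by norm_num : (0:ℝ) ≤ 2) hx) ht0.le]

/-- value at `0` via the Gamma function -/
lemma G_zero (s : ℝ) (hs : -1 < s) : Gfun s 0 = (1/2) * Real.Gamma ((s+1)/2) := by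
  have h : ∀ t : ℝ, Real.exp (-t ^ 2 - 2 * 0 * t) * t ^ s
      = t ^ s * Real.exp (-t ^ (2:ℝ)) := by
    intro t
    rw [Real.rpow_two]
    ring_nf
  unfold Gfun
  simp_rw [h]
  exact integral_rpow_mul_exp_neg_rpow two_pos hs

/-- the ODE identity `4 G_{3/2} + 4x G_{1/2} - G_{-1/2} = 0`, by integration by parts -/
lemma ode (x : ℝ) :
    4 * Gfun (3/2 : ℝ) x + 4 * x * Gfun (1/2 : ℝ) x - Gfun (-(1/2) : ℝ) x = 0 := by
  set f : ℝ → ℝ := fun t => Real.exp (-t ^ 2 - 2 * x * t) * t ^ (1/2 : ℝ) with hf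
  set f' : ℝ → ℝ := fun t => (-2 : ℝ) * (Real.exp (-t ^ 2 - 2 * x * t) * t ^ (3/2 : ℝ))
      + ((-(2*x)) * (Real.exp (-t ^ 2 - 2 * x * t) * t ^ (1/2 : ℝ))
      + (1/2 : ℝ) * (Real.exp (-t ^ 2 - 2 * x * t) * t ^ (-(1/2) : ℝ))) with hf'
  have hcont : ContinuousWithinAt f (Ici 0) 0 := by
    apply ContinuousAt.continuousWithinAt
    exact ((Real.continuous_exp.comp (by continuity)).continuousAt).mul
      (Real.continuousAt_rpow_const 0 (1/2) (Or.inr (by norm_num)))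
  have hderiv : ∀ t ∈ Ioi (0:ℝ), HasDerivAt f (f' t) t := by
    intro t ht
    have ht0 : (0:ℝ) < t := ht
    have h0 : HasDerivAt (fun t : ℝ => -t^2 - 2*x*t) (-(2*t) - 2*x) t := by
      have h1 : HasDerivAt (fun t : ℝ => (t:ℝ)^2) (2*t) t := by
        simpa using hasDerivAt_pow 2 t
      have h2 : HasDerivAt (fun t : ℝ => 2*x*t) (2*x) t := by
        simpa using (hasDerivAt_id t).const_mul (2*x)
      exact (h1.neg).sub h2
    have h3 : HasDerivAt (fun t : ℝ => t ^ (1/2 : ℝ)) ((1/2) * t ^ ((1/2 : ℝ) - 1)) t :=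
      Real.hasDerivAt_rpow_const (Or.inl (ne_of_gt ht0))
    have h4 := (h0.exp).mul h3
    have e1 : t ^ ((1/2 : ℝ) - 1) = t ^ (-(1/2) : ℝ) := by norm_num
    have e2 : t ^ (3/2 : ℝ) = t ^ (1/2 : ℝ) * t := by
      rw [← Real.rpow_add_one (ne_of_gt ht0)]; norm_num
    refine h4.congr_deriv ?_
    simp only [hf']
    rw [e1, e2]
    ring
  have hint3 : IntegrableOn (fun t : ℝ =>
      Real.exp (-t ^ 2 - 2 * x * t) * t ^ (3/2 : ℝ)) (Ioi 0) := intG _ x (by norm_num)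
  have hint1 : IntegrableOn (fun t : ℝ =>
      Real.exp (-t ^ 2 - 2 * x * t) * t ^ (1/2 : ℝ)) (Ioi 0) := intG _ x (by norm_num)
  have hintm : IntegrableOn (fun t : ℝ =>
      Real.exp (-t ^ 2 - 2 * x * t) * t ^ (-(1/2) : ℝ)) (Ioi 0) := intG _ x (by norm_num)
  have hf'int : IntegrableOn f' (Ioi 0) :=
    ((hint3.const_mul _).add ((hint1.const_mul _).add (hintm.const_mul _)))
  have htend : Tendsto f atTop (nhds 0) := by
    apply squeeze_zero' (g := fun t : ℝ => Real.exp (-t))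
    · filter_upwards [eventually_ge_atTop (0:ℝ)] with t ht
      exact mul_nonneg (Real.exp_pos _).le (Real.rpow_nonneg ht _)
    · filter_upwards [eventually_ge_atTop (max 1 (2 + 2*|x|))] with t ht
      have ht1 : (1:ℝ) ≤ t := le_trans (le_max_left _ _) ht
      have ht2 : 2 + 2*|x| ≤ t := le_trans (le_max_right _ _) ht
      have hrp : t ^ (1/2 : ℝ) ≤ t := by
        calc t ^ (1/2 : ℝ) ≤ t ^ (1 : ℝ) :=
              Real.rpow_le_rpow_of_exponent_le ht1 (by norm_num)
          _ = t := Real.rpow_one t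
      have hte : t ≤ Real.exp t := by
        have := Real.add_one_le_exp t; linarith
      calc f t ≤ Real.exp (-t ^ 2 - 2 * x * t) * t :=
            mul_le_mul_of_nonneg_left hrp (Real.exp_pos _).le
        _ ≤ Real.exp (-t ^ 2 - 2 * x * t) * Real.exp t :=
            mul_le_mul_of_nonneg_left hte (Real.exp_pos _).le
        _ = Real.exp (-t ^ 2 - 2 * x * t + t) := by rw [← Real.exp_add]
        _ ≤ Real.exp (-t) := by
            apply Real.exp_le_exp.2
            have h1 : -2 * x * t ≤ 2 * |x| * t := by
              have := neg_abs_le x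
              nlinarith [abs_nonneg x]
            nlinarith [abs_nonneg x]
    · exact Real.tendsto_exp_neg_atTop_nhds_zero
  have hIBP := integral_Ioi_of_hasDerivAt_of_tendsto hcont hderiv hf'int htend
  have hf0 : f 0 = 0 := by
    simp [hf, Real.zero_rpow (by norm_num : (1/2 : ℝ) ≠ 0)]
  rw [hf0, sub_zero] at hIBP
  have hsplit : ∫ t in Ioi (0:ℝ), f' t
      = (-2) * Gfun (3/2 : ℝ) x + ((-(2*x)) * Gfun (1/2 : ℝ) x
        + (1/2) * Gfun (-(1/2) : ℝ) x) := by
    have i1 : Integrable (fun t : ℝ =>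
        (-2:ℝ) * (Real.exp (-t ^ 2 - 2 * x * t) * t ^ (3/2:ℝ))) (volume.restrict (Ioi 0)) :=
      hint3.const_mul _
    have i2 : Integrable (fun t : ℝ =>
        (-(2*x)) * (Real.exp (-t ^ 2 - 2 * x * t) * t ^ (1/2:ℝ))) (volume.restrict (Ioi 0)) :=
      hint1.const_mul _
    have i3 : Integrable (fun t : ℝ =>
        (1/2:ℝ) * (Real.exp (-t ^ 2 - 2 * x * t) * t ^ (-(1/2):ℝ))) (volume.restrict (Ioi 0)) :=
      hintm.const_mul _
    have i23 : Integrable (fun t : ℝ =>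
        (-(2*x)) * (Real.exp (-t ^ 2 - 2 * x * t) * t ^ (1/2:ℝ))
        + (1/2:ℝ) * (Real.exp (-t ^ 2 - 2 * x * t) * t ^ (-(1/2):ℝ)))
        (volume.restrict (Ioi 0)) := i2.add i3
    simp only [hf']
    rw [MeasureTheory.integral_add i1 i23, MeasureTheory.integral_add i2 i3,
      MeasureTheory.integral_const_mul, MeasureTheory.integral_const_mul,
      MeasureTheory.integral_const_mul]
    rfl
  rw [hsplit] at hIBP
  linarith

/-! ### The function `v` and its derivatives -/

noncomputable def vd (x : ℝ) : ℝ :=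
  Real.exp (-x ^ 2 / 2) * π ^ (-(1 / 2) : ℝ) *
    (-x * Gfun (-(1/2) : ℝ) x - 2 * Gfun (1/2 : ℝ) x)

lemma vFun_eq : vFun = fun x => Real.exp (-x ^ 2 / 2) * π ^ (-(1 / 2) : ℝ) *
    Gfun (-(1/2) : ℝ) x := rfl

lemma hasDerivAt_E (x : ℝ) :
    HasDerivAt (fun x : ℝ => Real.exp (-x ^ 2 / 2))
      (Real.exp (-x ^ 2 / 2) * (-x)) x := by
  have h1 : HasDerivAt (fun x : ℝ => -x ^ 2 / 2) (-x) x := by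
    have := (hasDerivAt_pow 2 x).neg.div_const 2
    simpa using this.congr_deriv (by ring)
  exact h1.exp

lemma hasDerivAt_v (x : ℝ) : HasDerivAt vFun (vd x) x := by
  rw [vFun_eq]
  have hg := hasDerivAt_G (-(1/2) : ℝ) (by norm_num) x
  have hE := (hasDerivAt_E x).mul_const (π ^ (-(1 / 2) : ℝ))
  have h := hE.mul hg
  have e1 : Gfun ((-(1/2) : ℝ) + 1) = Gfun (1/2 : ℝ) := by norm_num
  rw [e1] at h
  refine h.congr_deriv ?_
  rw [vd]
  ring

lemma deriv_vFun : deriv vFun = vd := funext fun x => (hasDerivAt_v x).deriv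

lemma hasDerivAt_vd (x : ℝ) : HasDerivAt vd (x ^ 2 * vFun x) x := by
  have hg := hasDerivAt_G (-(1/2) : ℝ) (by norm_num) x
  have hg1 := hasDerivAt_G (1/2 : ℝ) (by norm_num) x
  have e1 : Gfun ((-(1/2) : ℝ) + 1) = Gfun (1/2 : ℝ) := by norm_num
  have e2 : Gfun ((1/2 : ℝ) + 1) = Gfun (3/2 : ℝ) := by norm_num
  rw [e1] at hg; rw [e2] at hg1
  have hinner : HasDerivAt (fun x : ℝ => -x * Gfun (-(1/2) : ℝ) x - 2 * Gfun (1/2 : ℝ) x)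
      ((-1) * Gfun (-(1/2) : ℝ) x + (-x) * (-2 * Gfun (1/2 : ℝ) x)
        - 2 * (-2 * Gfun (3/2 : ℝ) x)) x := by
    exact ((hasDerivAt_id x).neg.mul hg).sub (hg1.const_mul 2)
  have hE := (hasDerivAt_E x).mul_const (π ^ (-(1 / 2) : ℝ))
  have h := hE.mul hinner
  have hvd : vd = fun x => (Real.exp (-x ^ 2 / 2) * π ^ (-(1 / 2) : ℝ)) *
      (-x * Gfun (-(1/2) : ℝ) x - 2 * Gfun (1/2 : ℝ) x) := rfl
  rw [hvd]
  refine h.congr_deriv ?_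
  have hode := ode x
  simp only [vFun_eq]
  linear_combination (Real.exp (-x ^ 2 / 2) * π ^ (-(1 / 2) : ℝ)) * hode

/-- The Wronskian `W₁(b) = −v′(0)(v(b) − b v′(b)) − v(0) v′(b)` of Example 5.1. -/
noncomputable def W₁ (b : ℝ) : ℝ :=
  -deriv vFun 0 * (vFun b - b * deriv vFun b) - vFun 0 * deriv vFun b

lemma W₁_eq : W₁ = fun b => -vd 0 * (vFun b - b * vd b) - vFun 0 * vd b := by
  funext b; rw [W₁, deriv_vFun]

lemma hasDerivAt_W (b : ℝ) :
    HasDerivAt W₁ (b ^ 2 * vFun b * (b * vd 0 - vFun 0)) b := by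
  rw [W₁_eq]
  have h1 : HasDerivAt (fun b : ℝ => vFun b - b * vd b)
      (vd b - (1 * vd b + b * (b ^ 2 * vFun b))) b :=
    (hasDerivAt_v b).sub ((hasDerivAt_id b).mul (hasDerivAt_vd b))
  have h2 := (h1.const_mul (-vd 0)).sub ((hasDerivAt_vd b).const_mul (vFun 0))
  refine h2.congr_deriv ?_
  ring

/-! ### Values at 0 -/

lemma vFun_zero : vFun 0 = π ^ (-(1 / 2) : ℝ) * ((1/2) * Real.Gamma (1/4)) := by
  simp only [vFun_eq]
  rw [G_zero (-(1/2) : ℝ) (by norm_num)]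
  norm_num [Real.exp_zero]

lemma vd_zero : vd 0 = -(π ^ (-(1 / 2) : ℝ) * Real.Gamma (3/4)) := by
  simp only [vd]
  rw [G_zero (1/2 : ℝ) (by norm_num)]
  rw [show ((1:ℝ)/2 + 1)/2 = 3/4 by norm_num]
  simp [Real.exp_zero]

lemma pi_rpow_sq : (π ^ (-(1 / 2) : ℝ)) ^ 2 = π⁻¹ := by
  rw [← Real.rpow_natCast (π ^ (-(1 / 2) : ℝ)) 2, ← Real.rpow_mul Real.pi_pos.le]
  norm_num [Real.rpow_neg_one]

lemma W₁_zero : W₁ 0 = Real.sqrt 2 := by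
  rw [W₁_eq]
  simp only [mul_zero, zero_mul, sub_zero]
  have hGG : Real.Gamma (1/4) * Real.Gamma (3/4) = π / Real.sin (π * (1/4)) := by
    rw [show (3/4 : ℝ) = 1 - 1/4 by norm_num]
    exact Real.Gamma_mul_Gamma_one_sub (1/4)
  have hsin : Real.sin (π * (1/4)) = Real.sqrt 2 / 2 := by
    rw [show π * (1/4) = π / 4 by ring]
    exact Real.sin_pi_div_four
  have hs2 : Real.sqrt 2 * Real.sqrt 2 = 2 := Real.mul_self_sqrt (by norm_num)
  have hs2pos : (0:ℝ) < Real.sqrt 2 := Real.sqrt_pos.2 (by norm_num)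
  have hπ : (0:ℝ) < π := Real.pi_pos
  have key : (π ^ (-(1 / 2) : ℝ)) ^ 2 * (Real.Gamma (1/4) * Real.Gamma (3/4))
      = Real.sqrt 2 := by
    rw [pi_rpow_sq, hGG, hsin]
    rw [div_div_eq_mul_div]
    field_simp
    rw [Real.sq_sqrt (by norm_num : (0:ℝ) ≤ 2)]
  rw [vFun_zero, vd_zero]
  linear_combination key

/-! ### Bounds on `[0, 1]` -/

lemma vFun_nonneg {x : ℝ} (hx : 0 ≤ x) : 0 ≤ vFun x := by
  rw [vFun_eq]
  have : (0:ℝ) ≤ π ^ (-(1 / 2) : ℝ) := Real.rpow_nonneg Real.pi_pos.le _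
  exact mul_nonneg (mul_nonneg (Real.exp_pos _).le this) (G_nonneg _ x)

lemma vFun_le {x : ℝ} (hx : 0 ≤ x) : vFun x ≤ vFun 0 := by
  rw [vFun_eq]
  simp only
  have hπ : (0:ℝ) ≤ π ^ (-(1 / 2) : ℝ) := Real.rpow_nonneg Real.pi_pos.le _
  have hE : Real.exp (-x ^ 2 / 2) ≤ Real.exp (-(0:ℝ) ^ 2 / 2) := by
    apply Real.exp_le_exp.2; nlinarith [sq_nonneg x]
  have hG : Gfun (-(1/2) : ℝ) x ≤ Gfun (-(1/2) : ℝ) 0 := G_mono _ (by norm_num) hx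
  have h1 : (0:ℝ) ≤ Gfun (-(1/2) : ℝ) x := G_nonneg _ x
  have h2 : (0:ℝ) ≤ Real.exp (-(0:ℝ) ^ 2 / 2) * π ^ (-(1 / 2) : ℝ) :=
    mul_nonneg (Real.exp_pos _).le hπ
  calc Real.exp (-x ^ 2 / 2) * π ^ (-(1 / 2) : ℝ) * Gfun (-(1/2) : ℝ) x
      ≤ Real.exp (-(0:ℝ) ^ 2 / 2) * π ^ (-(1 / 2) : ℝ) * Gfun (-(1/2) : ℝ) x := by
        apply mul_le_mul_of_nonneg_right _ h1
        exact mul_le_mul_of_nonneg_right hE hπ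
    _ ≤ Real.exp (-(0:ℝ) ^ 2 / 2) * π ^ (-(1 / 2) : ℝ) * Gfun (-(1/2) : ℝ) 0 :=
        mul_le_mul_of_nonneg_left hG h2

lemma continuous_vFun : Continuous vFun :=
  continuous_iff_continuousAt.2 fun x => (hasDerivAt_v x).continuousAt

/-! ### Main theorem -/

/-- small-`b` asymptotics `W₁(b) = √2 + O(b³)` on `(0,1]`. -/
theorem stmt16 :
    ∃ C > 0, ∀ b ∈ Ioc (0 : ℝ) 1, |W₁ b - Real.sqrt 2| ≤ C * b ^ 3 := by
  set K : ℝ := vFun 0 * (|vd 0| + vFun 0) with hK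
  have hK0 : 0 ≤ K := by
    apply mul_nonneg (vFun_nonneg le_rfl)
    exact add_nonneg (abs_nonneg _) (vFun_nonneg le_rfl)
  refine ⟨K/3 + 1, by positivity, fun b hb => ?_⟩
  obtain ⟨hb0, hb1⟩ := hb
  -- FTC
  set w' : ℝ → ℝ := fun t => t ^ 2 * vFun t * (t * vd 0 - vFun 0) with hw'
  have hcontw : Continuous w' := by
    apply Continuous.mul
    · exact (continuous_pow 2).mul continuous_vFun
    · exact (continuous_id.mul continuous_const).sub continuous_const
  have hFTC : ∫ t in (0:ℝ)..b, w' t = W₁ b - W₁ 0 :=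
    intervalIntegral.integral_eq_sub_of_hasDerivAt
      (fun t _ => hasDerivAt_W t) (hcontw.intervalIntegrable 0 b)
  rw [← W₁_zero, ← hFTC]
  have hbound : ∀ᵐ t ∂(volume.restrict (Set.uIoc (0:ℝ) b)), ‖w' t‖ ≤ K * t ^ 2 := by
    filter_upwards [ae_restrict_mem measurableSet_uIoc] with t ht
    rw [Set.uIoc_of_le hb0.le] at ht
    obtain ⟨ht0, htb⟩ := ht
    have ht1 : t ≤ 1 := le_trans htb hb1
    rw [hw']
    simp only [norm_mul, Real.norm_eq_abs]
    have h1 : |t ^ 2| = t ^ 2 := abs_of_nonneg (sq_nonneg t)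
    have h2 : |vFun t| ≤ vFun 0 := by
      rw [abs_of_nonneg (vFun_nonneg ht0.le)]
      exact vFun_le ht0.le
    have h3 : |t * vd 0 - vFun 0| ≤ |vd 0| + vFun 0 := by
      calc |t * vd 0 - vFun 0| ≤ |t * vd 0| + |vFun 0| := abs_sub _ _
        _ = |t| * |vd 0| + vFun 0 := by
            rw [abs_mul, abs_of_nonneg (vFun_nonneg le_rfl)]
        _ ≤ 1 * |vd 0| + vFun 0 := by
            have : |t| ≤ 1 := abs_le.2 ⟨by linarith, ht1⟩
            have := mul_le_mul_of_nonneg_right this (abs_nonneg (vd 0))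
            linarith
        _ = |vd 0| + vFun 0 := by ring
    rw [h1]
    calc t ^ 2 * |vFun t| * |t * vd 0 - vFun 0|
        ≤ t ^ 2 * vFun 0 * (|vd 0| + vFun 0) := by
          apply mul_le_mul (mul_le_mul_of_nonneg_left h2 (sq_nonneg t)) h3 (abs_nonneg _)
          exact mul_nonneg (sq_nonneg t) (vFun_nonneg le_rfl)
      _ = K * t ^ 2 := by rw [hK]; ring
  have hKint : IntervalIntegrable (fun t : ℝ => K * t ^ 2) volume 0 b :=
    (continuous_const.mul (continuous_pow 2)).intervalIntegrable 0 b
  have hmain := intervalIntegral.norm_integral_le_abs_of_norm_le hbound hKint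
  have hval : ∫ t in (0:ℝ)..b, K * t ^ 2 = K * (b ^ 3 / 3) := by
    rw [intervalIntegral.integral_const_mul, integral_pow]
    norm_num
  rw [hval] at hmain
  have habs : |K * (b ^ 3 / 3)| = K * (b ^ 3 / 3) := by
    apply abs_of_nonneg; positivity
  rw [habs] at hmain
  calc |∫ t in (0:ℝ)..b, w' t| ≤ K * (b ^ 3 / 3) := hmain
    _ ≤ (K/3 + 1) * b ^ 3 := by nlinarith [pow_pos hb0 3]
end
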